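/- Let T > 0, α > 1/2, and let x : [0,T] → ℝ be α-Hölder continuous. Let f : ℝ → ℝ be twice continuously differentiable. Then for every t ∈ [0,T] and every sequence (π_n) of partitions of [0,t] with mesh |π_n| → 0, the left-endpoint Riemann–Stieltjes sums Σ_{i=1}^{k(n)} f′(x_{t_{i−1}^n}) (x_{t_i^n} − x_{t_{i−1}^n}) converge to f(x_t) − f(x_0) as n → ∞; that is, f(x_t) = f(x_0) + ∫₀^t f′(x_s) dx_s with the integral understood as the limit of Riemann–Stieltjes sums. -/

import Mathlib

open Set Filter

noncomputable section

/-- `x` is `α`-Hölder continuous on `[0,T]`. -/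
def HolderOnIcc (α T : ℝ) (x : ℝ → ℝ) : Prop :=
  ∃ C : ℝ, ∀ s ∈ Set.Icc (0:ℝ) T, ∀ t ∈ Set.Icc (0:ℝ) T, |x t - x s| ≤ C * |t - s| ^ α

/-- A partition `0 = t_0 < t_1 < … < t_k = T` of `[0,T]`. -/
structure RPartition (T : ℝ) where
  k : ℕ
  hk : 0 < k
  t : ℕ → ℝ
  h0 : t 0 = 0
  hT : t k = T
  mono : ∀ i, i < k → t i < t (i + 1)

/-- The mesh `|π| = max_i (t_i - t_{i-1})` of a partition. -/
def RPartition.mesh {T : ℝ} (π : RPartition T) : ℝ :=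
  (Finset.range π.k).sup' (Finset.nonempty_range_iff.mpr π.hk.ne')
    (fun i => π.t (i + 1) - π.t i)

/-- The left-endpoint Riemann–Stieltjes sum `Σ_i Z(t_{i-1}) (Y(t_i) - Y(t_{i-1}))`. -/
def RPartition.leftSum {T : ℝ} (π : RPartition T) (Z Y : ℝ → ℝ) : ℝ :=
  ∑ i ∈ Finset.range π.k, Z (π.t i) * (Y (π.t (i + 1)) - Y (π.t i))

lemma RPartition.t_mono {T : ℝ} (π : RPartition T) {i j : ℕ} (hij : i ≤ j) (hj : j ≤ π.k) :
    π.t i ≤ π.t j := by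
  induction j with
  | zero => simp_all
  | succ m ih =>
    rcases Nat.lt_succ_iff_lt_or_eq.mp (Nat.lt_succ_of_le hij) with h | h
    · exact (ih (Nat.lt_succ_iff.mp h) (le_of_lt (Nat.lt_of_succ_le hj))).trans
        (π.mono m (Nat.lt_of_succ_le hj)).le
    · exact le_of_eq (by rw [h])

lemma RPartition.t_mem {T : ℝ} (π : RPartition T) {i : ℕ} (hi : i ≤ π.k) :
    π.t i ∈ Set.Icc (0:ℝ) T := by
  constructor
  · rw [← π.h0]; exact π.t_mono (Nat.zero_le i) hi
  · have := π.t_mono hi le_rfl; rwa [π.hT] at this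

/-- Second-order Taylor-type bound. -/
lemma taylor_bound (f : ℝ → ℝ) (hd1 : Differentiable ℝ f) (hd2 : Differentiable ℝ (deriv f))
    (K M : ℝ) (hM : ∀ y ∈ Set.Icc (-K) K, |deriv (deriv f) y| ≤ M) (hM0 : 0 ≤ M)
    (a b : ℝ) (ha : a ∈ Set.Icc (-K) K) (hb : b ∈ Set.Icc (-K) K) :
    |f b - f a - deriv f a * (b - a)| ≤ M * (b - a) ^ 2 := by
  have hconv : Convex ℝ (Set.Icc (-K) K) := convex_Icc _ _
  have stepA : ∀ u ∈ Set.Icc (-K) K, |deriv f u - deriv f a| ≤ M * |u - a| := by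
    intro u hu
    have := Convex.norm_image_sub_le_of_norm_deriv_le (f := deriv f)
      (fun y _ => hd2 y) (fun y hy => by simpa using hM y hy) hconv ha hu
    simpa [Real.norm_eq_abs] using this
  set g : ℝ → ℝ := fun u => f u - deriv f a * u with hg
  have hgd : ∀ u : ℝ, HasDerivAt g (deriv f u - deriv f a) u := by
    intro u
    exact ((hd1 u).hasDerivAt).sub (by simpa using (hasDerivAt_id u).const_mul (deriv f a))
  have hgderiv : ∀ u : ℝ, deriv g u = deriv f u - deriv f a := fun u => (hgd u).deriv
  have habs : ∀ u ∈ Set.uIcc a b, |u - a| ≤ |b - a| := by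
    intro u hu
    rcases Set.mem_uIcc.mp hu with ⟨h1, h2⟩ | ⟨h1, h2⟩ <;>
      rw [abs_sub_le_iff] <;>
      constructor <;>
      cases' abs_cases (b - a) with hc hc <;>
      nlinarith [hc.1, hc.2]
  have huIcc : Set.uIcc a b ⊆ Set.Icc (-K) K := (Set.ordConnected_Icc).uIcc_subset ha hb
  have stepB := Convex.norm_image_sub_le_of_norm_deriv_le (f := g)
    (s := Set.uIcc a b) (C := M * |b - a|)
    (fun y _ => (hgd y).differentiableAt)
    (fun y hy => by
      rw [hgderiv, Real.norm_eq_abs]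
      exact le_trans (stepA y (huIcc hy)) (mul_le_mul_of_nonneg_left (habs y hy) hM0))
    (convex_uIcc a b) Set.left_mem_uIcc Set.right_mem_uIcc
  have heq : g b - g a = f b - f a - deriv f a * (b - a) := by simp only [hg]; ring
  rw [Real.norm_eq_abs, Real.norm_eq_abs, heq] at stepB
  calc |f b - f a - deriv f a * (b - a)| ≤ M * |b - a| * |b - a| := stepB
    _ = M * (b - a) ^ 2 := by rw [mul_assoc, ← abs_mul, ← sq, abs_sq]

/-- smooth Itô formula for an `α`-Hölder path with `α > 1/2`: for every
`t ∈ [0,T]`, the left-endpoint Riemann–Stieltjes sums `Σ_i f'(x_{t_{i-1}})(x_{t_i}-x_{t_{i-1}})`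
along any sequence of partitions of `[0,t]` with vanishing mesh converge to `f(x_t) - f(x_0)`. -/
theorem ito_formula_smooth
    (T α : ℝ) (hT : 0 < T) (hα : 1 / 2 < α)
    (x : ℝ → ℝ) (hx : HolderOnIcc α T x)
    (f : ℝ → ℝ) (hf : ContDiff ℝ 2 f) :
    ∀ t ∈ Set.Icc (0:ℝ) T, ∀ π : ℕ → RPartition t,
      Tendsto (fun n => (π n).mesh) atTop (nhds 0) →
      Tendsto (fun n => (π n).leftSum (fun u => deriv f (x u)) x)
        atTop (nhds (f (x t) - f (x 0))) := by
  obtain ⟨C, hC⟩ := hx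
  set C' : ℝ := max C 0 with hC'
  have hC'0 : 0 ≤ C' := le_max_right _ _
  have hHold : ∀ s ∈ Set.Icc (0:ℝ) T, ∀ u ∈ Set.Icc (0:ℝ) T, |x u - x s| ≤ C' * |u - s| ^ α :=
    fun s hs u hu => (hC s hs u hu).trans
      (mul_le_mul_of_nonneg_right (le_max_left _ _) (Real.rpow_nonneg (abs_nonneg _) _))
  have hα0 : (0:ℝ) < α := lt_trans (by norm_num) hα
  have hexp : (0:ℝ) ≤ 2 * α - 1 := by linarith
  set K : ℝ := |x 0| + C' * T ^ α with hK
  have hxK : ∀ u ∈ Set.Icc (0:ℝ) T, x u ∈ Set.Icc (-K) K := by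
    intro u hu
    have h0T : (0:ℝ) ∈ Set.Icc (0:ℝ) T := ⟨le_rfl, hT.le⟩
    have h1 : |x u - x 0| ≤ C' * |u - 0| ^ α := hHold 0 h0T u hu
    have h2 : |u - 0| ^ α ≤ T ^ α := by
      rw [sub_zero, abs_of_nonneg hu.1]
      exact Real.rpow_le_rpow hu.1 hu.2 hα0.le
    have h3 : |x u| ≤ K := by
      calc |x u| ≤ |x 0| + |x u - x 0| := by
            have := abs_add_le (x 0) (x u - x 0); simpa using this
        _ ≤ |x 0| + C' * T ^ α := by
            have := h1.trans (mul_le_mul_of_nonneg_left h2 hC'0); linarith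
    exact abs_le.mp h3
  have hd1 : Differentiable ℝ f := hf.differentiable (by norm_num)
  have hf2 : ContDiff ℝ (1 + 1) f := by norm_num; exact hf
  have hf' : ContDiff ℝ 1 (deriv f) := ((contDiff_succ_iff_deriv (n := 1)).mp hf2).2.2
  have hd2 : Differentiable ℝ (deriv f) := hf'.differentiable (by norm_num)
  have hf'1 : ContDiff ℝ (0 + 1) (deriv f) := by norm_num; exact hf'
  have hf'' : Continuous (deriv (deriv f)) :=
    ((contDiff_succ_iff_deriv (n := 0)).mp hf'1).2.2.continuous
  obtain ⟨M0, hM0⟩ := (isCompact_Icc (a := -K) (b := K)).exists_bound_of_continuousOn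
    hf''.continuousOn
  set M : ℝ := max M0 0 with hM
  have hMnn : 0 ≤ M := le_max_right _ _
  have hMb : ∀ y ∈ Set.Icc (-K) K, |deriv (deriv f) y| ≤ M := fun y hy =>
    le_trans (by simpa [Real.norm_eq_abs] using hM0 y hy) (le_max_left _ _)
  intro t ht π hmesh
  have hsub : Set.Icc (0:ℝ) t ⊆ Set.Icc (0:ℝ) T := Set.Icc_subset_Icc le_rfl ht.2
  have key : ∀ n : ℕ, |(π n).leftSum (fun u => deriv f (x u)) x - (f (x t) - f (x 0))|
      ≤ M * C' ^ 2 * (π n).mesh ^ (2 * α - 1) * t := by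
    intro n
    set p := π n with hp
    have htel : ∑ i ∈ Finset.range p.k, (f (x (p.t (i + 1))) - f (x (p.t i)))
        = f (x t) - f (x 0) := by
      rw [Finset.sum_range_sub (fun i => f (x (p.t i))), p.hT, p.h0]
    have hdiff : p.leftSum (fun u => deriv f (x u)) x - (f (x t) - f (x 0))
        = ∑ i ∈ Finset.range p.k,
          (deriv f (x (p.t i)) * (x (p.t (i + 1)) - x (p.t i))
            - (f (x (p.t (i + 1))) - f (x (p.t i)))) := by
      rw [Finset.sum_sub_distrib, htel]; rfl
    have hterm : ∀ i ∈ Finset.range p.k,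
        |deriv f (x (p.t i)) * (x (p.t (i + 1)) - x (p.t i))
            - (f (x (p.t (i + 1))) - f (x (p.t i)))|
        ≤ M * C' ^ 2 * p.mesh ^ (2 * α - 1) * (p.t (i + 1) - p.t i) := by
      intro i hi
      rw [Finset.mem_range] at hi
      have hai : p.t i ∈ Set.Icc (0:ℝ) t := p.t_mem hi.le
      have hbi : p.t (i + 1) ∈ Set.Icc (0:ℝ) t := p.t_mem (Nat.succ_le_of_lt hi)
      have haT := hsub hai
      have hbT := hsub hbi
      set a := x (p.t i) with hadef
      set b := x (p.t (i + 1)) with hbdef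
      set Δ : ℝ := p.t (i + 1) - p.t i with hΔ
      have hΔpos : 0 < Δ := sub_pos.mpr (p.mono i hi)
      have hΔmesh : Δ ≤ p.mesh := Finset.le_sup' (fun j => p.t (j + 1) - p.t j)
        (Finset.mem_range.mpr hi)
      have htay : |f b - f a - deriv f a * (b - a)| ≤ M * (b - a) ^ 2 :=
        taylor_bound f hd1 hd2 K M hMb hMnn a b (hxK _ haT) (hxK _ hbT)
      have hba : |b - a| ≤ C' * Δ ^ α := by
        have := hHold _ haT _ hbT
        rwa [show |p.t (i + 1) - p.t i| = Δ from abs_of_pos hΔpos] at this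
      have h1 : (b - a) ^ 2 ≤ C' ^ 2 * Δ ^ (α + α) := by
        calc (b - a) ^ 2 = |b - a| ^ 2 := (sq_abs _).symm
          _ ≤ (C' * Δ ^ α) ^ 2 := pow_le_pow_left₀ (abs_nonneg _) hba 2
          _ = C' ^ 2 * (Δ ^ α * Δ ^ α) := by ring
          _ = C' ^ 2 * Δ ^ (α + α) := by rw [← Real.rpow_add hΔpos]
      have h2 : Δ ^ (α + α) = Δ ^ (2 * α - 1) * Δ := by
        rw [show α + α = (2 * α - 1) + 1 by ring, Real.rpow_add hΔpos, Real.rpow_one]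
      have h3 : Δ ^ (2 * α - 1) ≤ p.mesh ^ (2 * α - 1) :=
        Real.rpow_le_rpow hΔpos.le hΔmesh hexp
      calc |deriv f a * (b - a) - (f b - f a)|
          = |f b - f a - deriv f a * (b - a)| := by rw [abs_sub_comm]
        _ ≤ M * (b - a) ^ 2 := htay
        _ ≤ M * (C' ^ 2 * Δ ^ (α + α)) := mul_le_mul_of_nonneg_left h1 hMnn
        _ = M * C' ^ 2 * (Δ ^ (2 * α - 1) * Δ) := by rw [h2]; ring
        _ ≤ M * C' ^ 2 * (p.mesh ^ (2 * α - 1) * Δ) := by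
            exact mul_le_mul_of_nonneg_left
              (mul_le_mul_of_nonneg_right h3 hΔpos.le)
              (mul_nonneg hMnn (pow_nonneg hC'0 2))
        _ = M * C' ^ 2 * p.mesh ^ (2 * α - 1) * Δ := by ring
    calc |p.leftSum (fun u => deriv f (x u)) x - (f (x t) - f (x 0))|
        = |∑ i ∈ Finset.range p.k,
            (deriv f (x (p.t i)) * (x (p.t (i + 1)) - x (p.t i))
              - (f (x (p.t (i + 1))) - f (x (p.t i))))| := by rw [hdiff]
      _ ≤ ∑ i ∈ Finset.range p.k,
            |deriv f (x (p.t i)) * (x (p.t (i + 1)) - x (p.t i))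
              - (f (x (p.t (i + 1))) - f (x (p.t i)))| :=
          Finset.abs_sum_le_sum_abs _ _
      _ ≤ ∑ i ∈ Finset.range p.k,
            M * C' ^ 2 * p.mesh ^ (2 * α - 1) * (p.t (i + 1) - p.t i) :=
          Finset.sum_le_sum hterm
      _ = M * C' ^ 2 * p.mesh ^ (2 * α - 1) * ∑ i ∈ Finset.range p.k,
            (p.t (i + 1) - p.t i) := by rw [← Finset.mul_sum]
      _ = M * C' ^ 2 * p.mesh ^ (2 * α - 1) * t := by
          rw [Finset.sum_range_sub p.t, p.hT, p.h0, sub_zero]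
  rw [← tendsto_sub_nhds_zero_iff]
  have hB : Tendsto (fun n => M * C' ^ 2 * (π n).mesh ^ (2 * α - 1) * t) atTop (nhds 0) := by
    have hc : ContinuousAt (fun m : ℝ => m ^ (2 * α - 1)) 0 :=
      Real.continuousAt_rpow_const 0 _ (Or.inr hexp)
    have h1 : Tendsto (fun n => ((π n).mesh) ^ (2 * α - 1)) atTop (nhds 0) := by
      have := hc.tendsto.comp hmesh
      simpa [Function.comp_def, Real.zero_rpow (show 2 * α - 1 ≠ 0 by linarith)] using this
    have := (h1.const_mul (M * C' ^ 2)).mul_const t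
    simpa [mul_assoc] using this
  exact squeeze_zero_norm (fun n => by rw [Real.norm_eq_abs]; exact key n) hB

end
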